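/- Let (Fₙ) be a filtration, (Sₙ) a nonnegative martingale with respect to (Fₙ), and (S'ₙ) a nonnegative martingale with respect to (Fₙ) such that for every n the increment ratio of S' is independent of F in the following precise sense: there is an intermediate filtration Gₙ with Fₙ₋₁ ⊆ Gₙ ⊆ Fₙ, Sₙ is Gₙ-measurable, E[S'ₙ | Gₙ] = S'ₙ₋₁, and E[Sₙ | Fₙ₋₁] = Sₙ₋₁. Then the product (Sₙ·S'ₙ) is a martingale with respect to (Fₙ). -/

import Mathlib

open MeasureTheory ProbabilityTheory

/-- Let `(ℱ n)` be a filtration, `S` and `S'` nonnegative martingales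
with respect to `ℱ`, and suppose there are intermediate σ-algebras `G (n+1)` with
`ℱ n ≤ G (n+1) ≤ ℱ (n+1)`, such that `S (n+1)` is `G (n+1)`-measurable and
`E[S' (n+1) | G (n+1)] = S' n`. If all products `S n * S' n` are integrable, then
the product process is a martingale with respect to `ℱ`. -/
theorem product_martingale_of_interleaved
    {Ω : Type*} {m : MeasurableSpace Ω} (μ : Measure Ω) [IsProbabilityMeasure μ]
    (ℱ : Filtration ℕ m) (G : ℕ → MeasurableSpace Ω)
    (S S' : ℕ → Ω → ℝ)
    (hS : Martingale S ℱ μ) (hS' : Martingale S' ℱ μ)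
    (hSnonneg : ∀ n ω, 0 ≤ S n ω) (hS'nonneg : ∀ n ω, 0 ≤ S' n ω)
    (hG_le : ∀ n, ℱ n ≤ G (n + 1)) (hle_G : ∀ n, G (n + 1) ≤ ℱ (n + 1))
    (hSmeas : ∀ n, Measurable[G (n + 1)] (S (n + 1)))
    (hcond : ∀ n, μ[S' (n + 1) | G (n + 1)] =ᵐ[μ] S' n)
    (hint : ∀ n, Integrable (fun ω => S n ω * S' n ω) μ) :
    Martingale (fun n ω => S n ω * S' n ω) ℱ μ := by
  have hadp : StronglyAdapted ℱ (fun n ω => S n ω * S' n ω) := fun n =>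
    (hS.stronglyAdapted n).mul (hS'.stronglyAdapted n)
  refine martingale_nat hadp hint fun n => ?_
  -- Step 1: E[S(n+1) * S'(n+1) | G(n+1)] = S(n+1) * S' n
  have hGm : G (n + 1) ≤ m := (hle_G n).trans (ℱ.le _)
  have hsm : StronglyMeasurable[G (n + 1)] (S (n + 1)) :=
    (hSmeas n).stronglyMeasurable
  have hintfg : Integrable (S (n + 1) * S' (n + 1)) μ := hint (n + 1)
  have step1 : μ[S (n + 1) * S' (n + 1) | G (n + 1)]
      =ᵐ[μ] fun ω => S (n + 1) ω * S' n ω := by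
    refine (condExp_mul_of_stronglyMeasurable_left hsm hintfg (hS'.integrable (n + 1))).trans ?_
    filter_upwards [hcond n] with ω hω
    simp [hω]
  -- Integrability of S(n+1) * S' n
  have hint2 : Integrable (fun ω => S (n + 1) ω * S' n ω) μ :=
    integrable_condExp.congr step1
  -- Step 2: tower
  have tower : μ[fun ω => S (n + 1) ω * S' (n + 1) ω | ℱ n]
      =ᵐ[μ] μ[fun ω => S (n + 1) ω * S' n ω | ℱ n] := by
    have := condExp_condExp_of_le (hG_le n) hGm (f := S (n + 1) * S' (n + 1)) (μ := μ)
    refine Filter.EventuallyEq.trans ?_ (condExp_congr_ae step1)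
    exact this.symm
  -- Step 3: pull out S' n
  have hsm' : StronglyMeasurable[ℱ n] (S' n) := hS'.stronglyAdapted n
  have hint3 : Integrable (S' n * S (n + 1)) μ := by
    refine hint2.congr ?_
    exact Filter.Eventually.of_forall fun ω => by simp [mul_comm]
  have step3 : μ[fun ω => S (n + 1) ω * S' n ω | ℱ n]
      =ᵐ[μ] fun ω => S' n ω * (μ[S (n + 1) | ℱ n]) ω := by
    have h := condExp_mul_of_stronglyMeasurable_left hsm' hint3 (hS.integrable (n + 1))
    refine Filter.EventuallyEq.trans ?_ h
    refine condExp_congr_ae (Filter.Eventually.of_forall fun ω => ?_)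
    simp [Pi.mul_apply, mul_comm]
  refine (Filter.EventuallyEq.trans ?_ (tower.trans step3).symm)
  filter_upwards [hS.condExp_ae_eq (Nat.le_succ n)] with ω hω
  rw [hω, mul_comm]
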